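/- Let r ≥ 3 be an integer. Then there exist polynomials A and B in r−1 variables such that, in ℂ[p₁,…,p_r], Σ_{k=1}^r p_k^{2r−2} = (r−1)·z_{r−1}² + z_{r−1}·B(z₁,…,z_{r−2},z_r) + A(z₁,…,z_{r−2},z_r). (In other words, when the power sum of degree 2r−2 is expressed through the generators z₁,…,z_r of the ring of symmetric polynomials, the coefficient of (z_{r−1})² equals r−1 and no higher power of z_{r−1} occurs.) -/

import Mathlib

open MvPolynomial

/-- Normalized power sums `z_i = (1/i) Σ_{k=1}^r p_k^i` in `ℂ[p₁,…,p_r]`. -/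
noncomputable def zPol (r : ℕ) (i : ℕ) : MvPolynomial (Fin r) ℂ :=
  C ((1 : ℂ) / (i : ℂ)) * ∑ k : Fin r, (X k) ^ i

/-- The substitution variables `(z₁, …, z_{r−2}, z_r)` (omitting `z_{r−1}`). -/
noncomputable def zVars (r : ℕ) : Fin (r - 1) → MvPolynomial (Fin r) ℂ :=
  fun m => if (m : ℕ) < r - 2 then zPol r ((m : ℕ) + 1) else zPol r r

namespace PSQuad

variable {r : ℕ}

/-- weight function -/
def wf (r : ℕ) : Fin r → ℕ := fun i => (i : ℕ) + 1

noncomputable def Zf (r : ℕ) : Fin r → MvPolynomial (Fin r) ℂ :=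
  fun i => zPol r ((i : ℕ) + 1)

def Rep (r : ℕ) (n : ℕ) (g : MvPolynomial (Fin r) ℂ) : Prop :=
  ∃ q : MvPolynomial (Fin r) ℂ,
    q.IsWeightedHomogeneous (wf r) n ∧ aeval (Zf r) q = g

lemma Rep.zero {n : ℕ} : Rep r n 0 :=
  ⟨0, isWeightedHomogeneous_zero _ _ _, map_zero _⟩

lemma Rep.one : Rep r 0 1 := ⟨1, isWeightedHomogeneous_one _ _, map_one _⟩

lemma Rep.add {n : ℕ} {g h : MvPolynomial (Fin r) ℂ} (hg : Rep r n g)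
    (hh : Rep r n h) : Rep r n (g + h) := by
  obtain ⟨q1, h1, e1⟩ := hg; obtain ⟨q2, h2, e2⟩ := hh
  exact ⟨q1 + q2, h1.add h2, by rw [map_add, e1, e2]⟩

lemma Rep.mul {m n : ℕ} {g h : MvPolynomial (Fin r) ℂ} (hg : Rep r m g)
    (hh : Rep r n h) : Rep r (m + n) (g * h) := by
  obtain ⟨q1, h1, e1⟩ := hg; obtain ⟨q2, h2, e2⟩ := hh
  exact ⟨q1 * q2, h1.mul h2, by rw [map_mul, e1, e2]⟩

lemma Rep.cmul {n : ℕ} (a : ℂ) {g : MvPolynomial (Fin r) ℂ} (hg : Rep r n g) :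
    Rep r n (C a * g) := by
  obtain ⟨q, h1, e1⟩ := hg
  refine ⟨C a * q, ?_, ?_⟩
  · simpa using (isWeightedHomogeneous_C (wf r) a).mul h1
  · rw [map_mul, aeval_C, e1, algebraMap_eq]

lemma Rep.sub {n : ℕ} {g h : MvPolynomial (Fin r) ℂ} (hg : Rep r n g)
    (hh : Rep r n h) : Rep r n (g - h) := by
  have := hg.add ((hh.cmul (-1)))
  simpa [sub_eq_add_neg] using this

lemma Rep.sum {α : Type*} {s : Finset α} {n : ℕ} {f : α → MvPolynomial (Fin r) ℂ}
    (h : ∀ a ∈ s, Rep r n (f a)) : Rep r n (∑ a ∈ s, f a) := by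
  classical
  induction s using Finset.induction_on with
  | empty => simpa using Rep.zero
  | insert _ _ hx ih =>
    rw [Finset.sum_insert hx]
    exact (h _ (Finset.mem_insert_self _ _)).add
      (ih fun a ha => h a (Finset.mem_insert_of_mem ha))

lemma zPol_eq_psum (i : ℕ) : zPol r i = C ((1 : ℂ) / i) * psum (Fin r) ℂ i := rfl

lemma rep_psum_le {m : ℕ} (h1 : 1 ≤ m) (h2 : m ≤ r) :
    Rep r m (psum (Fin r) ℂ m) := by
  refine ⟨C (m : ℂ) * X ⟨m - 1, by omega⟩, ?_, ?_⟩
  · have := (isWeightedHomogeneous_C (wf r) (m : ℂ)).mul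
      (isWeightedHomogeneous_X ℂ (wf r) ⟨m - 1, by omega⟩)
    have hw : wf r ⟨m - 1, by omega⟩ = m := by simp [wf]; omega
    simpa [hw] using this
  · rw [map_mul, aeval_C, aeval_X, algebraMap_eq]
    show C (m : ℂ) * Zf r _ = _
    rw [Zf]
    have hv : ((⟨m - 1, by omega⟩ : Fin r) : ℕ) + 1 = m := by simp; omega
    rw [hv, zPol_eq_psum, ← mul_assoc, ← C_mul, mul_one_div,
      div_self (Nat.cast_ne_zero.2 (by omega)), C_1, one_mul]

lemma esymm_zero_of_lt {n : ℕ} (h : r < n) : esymm (Fin r) ℂ n = 0 := by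
  rw [esymm, Finset.powersetCard_eq_empty.2 (by simpa using h), Finset.sum_empty]

lemma natCast_eq_C (n : ℕ) : ((n : ℕ) : MvPolynomial (Fin r) ℂ) = C (n : ℂ) := by
  simp

lemma neg_one_pow_eq_C (k : ℕ) :
    ((-1 : MvPolynomial (Fin r) ℂ) ^ k) = C ((-1 : ℂ) ^ k) := by
  simp

lemma rep_esymm : ∀ n : ℕ, n ≤ r → Rep r n (esymm (Fin r) ℂ n) := by
  intro n
  induction n using Nat.strong_induction_on with
  | _ n ih =>
    intro hn
    rcases Nat.eq_zero_or_pos n with h0 | h0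
    · subst h0; rw [esymm_zero]; exact Rep.one
    · have key := mul_esymm_eq_sum (Fin r) ℂ n
      have hne : (n : ℂ) ≠ 0 := Nat.cast_ne_zero.2 (by omega)
      have hE : esymm (Fin r) ℂ n = C ((n : ℂ)⁻¹) * ((-1) ^ (n + 1) *
          ∑ a ∈ Finset.HasAntidiagonal.antidiagonal n with a.1 < n,
            (-1) ^ a.1 * esymm (Fin r) ℂ a.1 * psum (Fin r) ℂ a.2) := by
        rw [← key, natCast_eq_C, ← mul_assoc, ← C_mul, inv_mul_cancel₀ hne, C_1, one_mul]
      rw [hE, neg_one_pow_eq_C]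
      refine Rep.cmul _ (Rep.cmul _ (Rep.sum ?_))
      intro a ha
      simp only [Finset.mem_filter, Finset.HasAntidiagonal.mem_antidiagonal] at ha
      rw [neg_one_pow_eq_C, mul_assoc]
      have hrep := (ih a.1 ha.2 (by omega)).mul (rep_psum_le (m := a.2) (by omega) (by omega))
      rw [ha.1] at hrep
      exact Rep.cmul _ hrep

lemma rep_psum : ∀ n : ℕ, 1 ≤ n → Rep r n (psum (Fin r) ℂ n) := by
  intro n
  induction n using Nat.strong_induction_on with
  | _ n ih =>
    intro hn
    by_cases hnr : n ≤ r
    · exact rep_psum_le hn hnr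
    · have key := psum_eq_mul_esymm_sub_sum (Fin r) ℂ n (by omega)
      rw [key, esymm_zero_of_lt (by omega), mul_zero]
      refine Rep.zero.sub (Rep.sum ?_)
      intro a ha
      simp only [Finset.mem_filter, Finset.HasAntidiagonal.mem_antidiagonal, Set.mem_Ioo] at ha
      rw [neg_one_pow_eq_C, mul_assoc]
      by_cases har : a.1 ≤ r
      · have hrep := (rep_esymm a.1 har).mul (ih a.2 (by omega) (by omega))
        rw [ha.1] at hrep
        exact Rep.cmul _ hrep
      · rw [esymm_zero_of_lt (by omega), zero_mul, mul_zero]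
        exact Rep.zero

def jdx (hr : 3 ≤ r) : Fin r := ⟨r - 2, by omega⟩

def emb (hr : 3 ≤ r) : Fin (r - 1) → Fin r :=
  fun m => if (m : ℕ) < r - 2 then ⟨m, by omega⟩ else ⟨(m : ℕ) + 1, by omega⟩

variable (hr : 3 ≤ r)

lemma emb_val (m : Fin (r - 1)) :
    ((emb hr m : Fin r) : ℕ) = if (m : ℕ) < r - 2 then (m : ℕ) else (m : ℕ) + 1 := by
  unfold emb; split <;> rfl

lemma emb_ne (m : Fin (r - 1)) : emb hr m ≠ jdx hr := by
  intro h
  have h2 := congrArg Fin.val h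
  rw [emb_val] at h2
  simp only [jdx] at h2
  split at h2 <;> omega

lemma emb_surj (i : Fin r) (hi : i ≠ jdx hr) : ∃ m, emb hr m = i := by
  have hiv : (i : ℕ) ≠ r - 2 := by
    intro h; exact hi (Fin.ext h)
  rcases lt_or_gt_of_ne hiv with h | h
  · refine ⟨⟨(i : ℕ), by omega⟩, ?_⟩
    unfold emb; split
    · exact Fin.ext rfl
    · next h' => exact absurd h h'
  · refine ⟨⟨(i : ℕ) - 1, by omega⟩, ?_⟩
    unfold emb; split
    · next h' =>
      have h2 : (i : ℕ) - 1 < r - 2 := h'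
      omega
    · exact Fin.ext (show (i : ℕ) - 1 + 1 = (i : ℕ) by omega)

lemma emb_inj : Function.Injective (emb hr) := by
  intro m m' h
  have h2 := congrArg Fin.val h
  rw [emb_val, emb_val] at h2
  apply Fin.ext
  split at h2 <;> split at h2 <;> omega

lemma univ_eq :
    (Finset.univ : Finset (Fin r)) = insert (jdx hr) (Finset.univ.image (emb hr)) := by
  ext i
  simp only [Finset.mem_univ, Finset.mem_insert, Finset.mem_image, true_and, true_iff]
  by_cases h : i = jdx hr
  · exact Or.inl h
  · exact Or.inr (by simpa using emb_surj hr i h)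

lemma jdx_not_mem : jdx hr ∉ Finset.univ.image (emb hr) := by
  simp only [Finset.mem_image, Finset.mem_univ, true_and, not_exists]
  exact fun m h => emb_ne hr m h

lemma prod_split {M : Type*} [CommMonoid M] (f : Fin r → M) :
    ∏ i, f i = f (jdx hr) * ∏ m : Fin (r - 1), f (emb hr m) := by
  rw [univ_eq hr, Finset.prod_insert (jdx_not_mem hr),
    Finset.prod_image (fun a _ b _ h => emb_inj hr h)]

lemma sum_split (f : Fin r → ℕ) :
    ∑ i, f i = f (jdx hr) + ∑ m : Fin (r - 1), f (emb hr m) := by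
  rw [univ_eq hr, Finset.sum_insert (jdx_not_mem hr),
    Finset.sum_image (fun a _ b _ h => emb_inj hr h)]

lemma wf_jdx : wf r (jdx hr) = r - 1 := by
  simp only [wf, jdx]; omega

lemma weight_eq (d : Fin r →₀ ℕ) :
    Finsupp.weight (wf r) d
      = d (jdx hr) * (r - 1) + ∑ m : Fin (r - 1), d (emb hr m) * wf r (emb hr m) := by
  rw [Finsupp.weight_apply, Finsupp.sum_fintype _ _ (by intro i; simp)]
  rw [sum_split hr (fun i => d i • wf r i)]
  rw [smul_eq_mul, wf_jdx hr]
  simp_rw [smul_eq_mul]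

lemma Zf_emb (m : Fin (r - 1)) : Zf r (emb hr m) = zVars r m := by
  by_cases h : (m : ℕ) < r - 2
  · simp only [Zf, zVars, emb, h, if_true]
  · have hm : (m : ℕ) = r - 2 := by have := m.isLt; omega
    simp only [Zf, zVars, emb, h, if_false]
    congr 1
    omega

lemma Zf_jdx : Zf r (jdx hr) = zPol r (r - 1) := by
  simp only [Zf, jdx]
  congr 1
  omega

noncomputable def pull (hr : 3 ≤ r) (d : Fin r →₀ ℕ) : Fin (r - 1) →₀ ℕ :=
  Finsupp.equivFunOnFinite.symm (fun m => d (emb hr m))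

lemma pull_apply (d : Fin r →₀ ℕ) (m : Fin (r - 1)) : pull hr d m = d (emb hr m) := rfl

lemma aeval_monomial_pull (d : Fin r →₀ ℕ) (c : ℂ) :
    aeval (zVars r) (monomial (pull hr d) c)
      = C c * ∏ m : Fin (r - 1), Zf r (emb hr m) ^ d (emb hr m) := by
  rw [aeval_monomial, algebraMap_eq, Finsupp.prod_fintype _ _ (fun m => pow_zero _)]
  congr 1
  exact Finset.prod_congr rfl fun m _ => by rw [pull_apply, Zf_emb hr]

lemma aeval_monomial_split (d : Fin r →₀ ℕ) (c : ℂ) :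
    aeval (Zf r) (monomial d c)
      = C c * (Zf r (jdx hr) ^ d (jdx hr)
          * ∏ m : Fin (r - 1), Zf r (emb hr m) ^ d (emb hr m)) := by
  rw [aeval_monomial, algebraMap_eq, Finsupp.prod_fintype _ _ (fun i => pow_zero _),
    prod_split hr (fun i => Zf r i ^ d i)]

noncomputable def vpt (r : ℕ) (ζ : ℂ) : Fin r → ℂ :=
  fun k => if (k : ℕ) < r - 1 then ζ ^ (k : ℕ) else 0

include hr in
lemma sum_vpt_pow {ζ : ℂ} (hζ : IsPrimitiveRoot ζ (r - 1)) (i : ℕ) (hi : 1 ≤ i) :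
    ∑ k : Fin r, vpt r ζ k ^ i = if (r - 1) ∣ i then ((r - 1 : ℕ) : ℂ) else 0 := by
  have h1 : ∑ k : Fin r, vpt r ζ k ^ i
      = ∑ k ∈ Finset.range r, (if k < r - 1 then ζ ^ k else 0) ^ i :=
    Fin.sum_univ_eq_sum_range (fun k => (if k < r - 1 then ζ ^ k else 0) ^ i) r
  rw [h1]
  have h2 : ∑ k ∈ Finset.range r, (if k < r - 1 then ζ ^ k else 0) ^ i
      = ∑ k ∈ Finset.range (r - 1), (if k < r - 1 then ζ ^ k else 0) ^ i
        + (if r - 1 < r - 1 then ζ ^ (r - 1) else 0) ^ i := by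
    rw [← Finset.sum_range_succ, Nat.sub_add_cancel (by omega : 1 ≤ r)]
  rw [h2, if_neg (lt_irrefl _), zero_pow (by omega : i ≠ 0), add_zero]
  have h3 : ∀ k ∈ Finset.range (r - 1),
      (if k < r - 1 then ζ ^ k else 0) ^ i = (ζ ^ i) ^ k := by
    intro k hk
    rw [if_pos (Finset.mem_range.1 hk), ← pow_mul, ← pow_mul, Nat.mul_comm]
  rw [Finset.sum_congr rfl h3]
  by_cases hdvd : (r - 1) ∣ i
  · rw [if_pos hdvd, (hζ.pow_eq_one_iff_dvd i).2 hdvd]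
    simp
  · rw [if_neg hdvd, geom_sum_eq (fun h => hdvd ((hζ.pow_eq_one_iff_dvd i).1 h)) (r - 1),
      ← pow_mul, mul_comm i, pow_mul, hζ.pow_eq_one, one_pow, sub_self, zero_div]

include hr in
lemma eval_vpt_zPol {ζ : ℂ} (hζ : IsPrimitiveRoot ζ (r - 1)) (i : ℕ) (hi : 1 ≤ i) :
    eval (vpt r ζ) (zPol r i)
      = if (r - 1) ∣ i then (1 / (i : ℂ)) * ((r - 1 : ℕ) : ℂ) else 0 := by
  rw [zPol, eval_mul, eval_C]
  rw [show eval (vpt r ζ) (∑ k : Fin r, (X k) ^ i) = ∑ k : Fin r, vpt r ζ k ^ i by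
    simp]
  rw [sum_vpt_pow hr hζ i hi]
  split_ifs
  · rfl
  · rw [mul_zero]

include hr in
lemma eval_vpt_aeval {ζ : ℂ} (hζ : IsPrimitiveRoot ζ (r - 1))
    (Q : MvPolynomial (Fin (r - 1)) ℂ) (hQ : coeff 0 Q = 0) :
    eval (vpt r ζ) (aeval (zVars r) Q) = 0 := by
  have hzv : ∀ m : Fin (r - 1), eval (vpt r ζ) (zVars r m) = 0 := by
    intro m
    rw [zVars]
    split_ifs with h
    · rw [eval_vpt_zPol hr hζ _ (by omega), if_neg]
      intro hdvd
      have := Nat.le_of_dvd (by omega) hdvd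
      omega
    · rw [eval_vpt_zPol hr hζ r (by omega), if_neg]
      intro hdvd
      have h1 : (r - 1) ∣ (r - (r - 1)) := Nat.dvd_sub hdvd dvd_rfl
      rw [show r - (r - 1) = 1 by omega] at h1
      have := Nat.le_of_dvd one_pos h1
      omega
  rw [aeval_def, eval₂_comp_left (eval (vpt r ζ))]
  have hring : (eval (vpt r ζ)).comp (algebraMap ℂ (MvPolynomial (Fin r) ℂ))
      = RingHom.id ℂ := by
    ext a
    simp [algebraMap_eq]
  rw [hring, show (eval (vpt r ζ)) ∘ (zVars r) = fun _ => (0 : ℂ) from funext hzv,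
    eval₂_id, eval_zero', constantCoeff_eq]
  exact hQ


end PSQuad

/-- `Σ p_k^{2r−2} = (r−1)·z_{r−1}² + z_{r−1}·B(z₁,…,z_{r−2},z_r)
+ A(z₁,…,z_{r−2},z_r)` for some polynomials `A`, `B` in `r−1` variables. -/
theorem power_sum_quadratic_in_z_rm1 (r : ℕ) (hr : 3 ≤ r) :
    ∃ A B : MvPolynomial (Fin (r - 1)) ℂ,
      (∑ k : Fin r, (X k : MvPolynomial (Fin r) ℂ) ^ (2 * r - 2)) =
        C ((r : ℂ) - 1) * (zPol r (r - 1)) ^ 2 +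
          zPol r (r - 1) * (MvPolynomial.aeval (zVars r) B) +
          MvPolynomial.aeval (zVars r) A := by
  classical
  obtain ⟨P, hhom, hae⟩ := PSQuad.rep_psum (r := r) (2 * r - 2) (by omega)
  have hwt : ∀ d ∈ P.support,
      d (PSQuad.jdx hr) * (r - 1)
        + ∑ m : Fin (r - 1), d (PSQuad.emb hr m) * PSQuad.wf r (PSQuad.emb hr m)
        = 2 * r - 2 := by
    intro d hd
    rw [← PSQuad.weight_eq hr]
    exact hhom (mem_support_iff.1 hd)
  set s0 := P.support.filter (fun d => d (PSQuad.jdx hr) = 0) with hs0def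
  set srest := P.support.filter (fun d => ¬ d (PSQuad.jdx hr) = 0) with hsrdef
  set s1 := srest.filter (fun d => d (PSQuad.jdx hr) = 1) with hs1def
  set s2 := srest.filter (fun d => ¬ d (PSQuad.jdx hr) = 1) with hs2def
  set c0 := coeff (Finsupp.single (PSQuad.jdx hr) 2) P with hc0def
  set A := ∑ d ∈ s0, monomial (PSQuad.pull hr d) (coeff d P) with hAdef
  set B := ∑ d ∈ s1, monomial (PSQuad.pull hr d) (coeff d P) with hBdef
  have hsplit : P = (∑ d ∈ s0, monomial d (coeff d P))
      + ((∑ d ∈ s1, monomial d (coeff d P)) + (∑ d ∈ s2, monomial d (coeff d P))) := by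
    conv_lhs => rw [P.as_sum]
    rw [← Finset.sum_filter_add_sum_filter_not P.support (fun d => d (PSQuad.jdx hr) = 0)
        (fun d => monomial d (coeff d P)),
      ← Finset.sum_filter_add_sum_filter_not srest (fun d => d (PSQuad.jdx hr) = 1)
        (fun d => monomial d (coeff d P))]
  have hs2sub : s2 ⊆ {Finsupp.single (PSQuad.jdx hr) 2} := by
    intro d hd
    rw [hs2def, Finset.mem_filter, hsrdef, Finset.mem_filter] at hd
    obtain ⟨⟨hdsup, hd0⟩, hd1⟩ := hd
    have hw := hwt d hdsup
    have hle : d (PSQuad.jdx hr) ≤ 2 := by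
      by_contra hgt
      push_neg at hgt
      have : 3 * (r - 1) ≤ d (PSQuad.jdx hr) * (r - 1) := Nat.mul_le_mul_right _ hgt
      omega
    have h2 : d (PSQuad.jdx hr) = 2 := by omega
    have hrest : ∑ m : Fin (r - 1),
        d (PSQuad.emb hr m) * PSQuad.wf r (PSQuad.emb hr m) = 0 := by
      rw [h2] at hw; omega
    have hzero : ∀ m, d (PSQuad.emb hr m) = 0 := by
      intro m
      have hm := (Finset.sum_eq_zero_iff.1 hrest) m (Finset.mem_univ m)
      rcases Nat.mul_eq_zero.1 hm with h | h
      · exact h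
      · exact absurd h (by simp [PSQuad.wf])
    rw [Finset.mem_singleton]
    ext i
    by_cases hij : i = PSQuad.jdx hr
    · subst hij; rw [h2, Finsupp.single_eq_same]
    · obtain ⟨m, hm⟩ := PSQuad.emb_surj hr i hij
      rw [Finsupp.single_eq_of_ne' (fun h => hij h.symm), ← hm]
      exact hzero m
  have hs2sum : ∑ d ∈ s2, monomial d (coeff d P)
      = monomial (Finsupp.single (PSQuad.jdx hr) 2) c0 := by
    rw [show (monomial (Finsupp.single (PSQuad.jdx hr) 2) c0 : MvPolynomial (Fin r) ℂ)
        = ∑ d ∈ ({Finsupp.single (PSQuad.jdx hr) 2} : Finset (Fin r →₀ ℕ)),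
            monomial d (coeff d P) by rw [Finset.sum_singleton]]
    apply Finset.sum_subset hs2sub
    intro x hx hnx
    rw [Finset.mem_singleton] at hx
    subst hx
    by_cases hmem : Finsupp.single (PSQuad.jdx hr) 2 ∈ P.support
    · exfalso
      apply hnx
      rw [hs2def, Finset.mem_filter, hsrdef, Finset.mem_filter]
      refine ⟨⟨hmem, ?_⟩, ?_⟩ <;> simp [Finsupp.single_eq_same]
    · rw [notMem_support_iff.1 hmem, monomial_zero]
  have hzj : PSQuad.Zf r (PSQuad.jdx hr) = zPol r (r - 1) := PSQuad.Zf_jdx hr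
  have hA : aeval (PSQuad.Zf r) (∑ d ∈ s0, monomial d (coeff d P))
      = aeval (zVars r) A := by
    rw [hAdef, map_sum, map_sum]
    apply Finset.sum_congr rfl
    intro d hd
    rw [hs0def, Finset.mem_filter] at hd
    rw [PSQuad.aeval_monomial_split hr, PSQuad.aeval_monomial_pull hr, hd.2, pow_zero, one_mul]
  have hB : aeval (PSQuad.Zf r) (∑ d ∈ s1, monomial d (coeff d P))
      = zPol r (r - 1) * aeval (zVars r) B := by
    rw [hBdef, map_sum, map_sum, Finset.mul_sum]
    apply Finset.sum_congr rfl
    intro d hd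
    rw [hs1def, Finset.mem_filter] at hd
    rw [PSQuad.aeval_monomial_split hr, PSQuad.aeval_monomial_pull hr, hd.2, pow_one, hzj]
    ring
  have hC : aeval (PSQuad.Zf r) (monomial (Finsupp.single (PSQuad.jdx hr) 2) c0)
      = C c0 * zPol r (r - 1) ^ 2 := by
    rw [aeval_monomial, algebraMap_eq,
      show ((Finsupp.single (PSQuad.jdx hr) 2).prod fun i k => PSQuad.Zf r i ^ k)
          = PSQuad.Zf r (PSQuad.jdx hr) ^ 2 from Finsupp.prod_single_index (pow_zero _), hzj]
  have hstar : psum (Fin r) ℂ (2 * r - 2)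
      = C c0 * zPol r (r - 1) ^ 2 + zPol r (r - 1) * aeval (zVars r) B
        + aeval (zVars r) A := by
    rw [← hae]
    conv_lhs => rw [hsplit]
    rw [map_add, map_add, hA, hB, hs2sum, hC]
    ring
  have hA0 : coeff 0 A = 0 := by
    rw [hAdef, coeff_sum]
    apply Finset.sum_eq_zero
    intro d hd
    rw [hs0def, Finset.mem_filter] at hd
    rw [coeff_monomial, if_neg]
    intro hpull
    have hzero : ∀ m, d (PSQuad.emb hr m) = 0 := by
      intro m
      calc d (PSQuad.emb hr m) = PSQuad.pull hr d m := (PSQuad.pull_apply hr d m).symm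
        _ = 0 := by rw [hpull]; rfl
    have hdz : d = 0 := by
      ext i
      by_cases hij : i = PSQuad.jdx hr
      · subst hij; exact hd.2
      · obtain ⟨m, hm⟩ := PSQuad.emb_surj hr i hij
        rw [← hm]; exact hzero m
    have hw := hwt d hd.1
    rw [hdz] at hw
    simp at hw
    omega
  have hB0 : coeff 0 B = 0 := by
    rw [hBdef, coeff_sum]
    apply Finset.sum_eq_zero
    intro d hd
    rw [hs1def, Finset.mem_filter, hsrdef, Finset.mem_filter] at hd
    obtain ⟨⟨hdsup, _⟩, hd1⟩ := hd
    rw [coeff_monomial, if_neg]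
    intro hpull
    have hzero : ∀ m, d (PSQuad.emb hr m) = 0 := by
      intro m
      calc d (PSQuad.emb hr m) = PSQuad.pull hr d m := (PSQuad.pull_apply hr d m).symm
        _ = 0 := by rw [hpull]; rfl
    have hdz : d = Finsupp.single (PSQuad.jdx hr) 1 := by
      ext i
      by_cases hij : i = PSQuad.jdx hr
      · subst hij; rw [hd1, Finsupp.single_eq_same]
      · obtain ⟨m, hm⟩ := PSQuad.emb_surj hr i hij
        rw [Finsupp.single_eq_of_ne' (fun h => hij h.symm), ← hm]
        exact hzero m
    have hw := hwt d hdsup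
    rw [hdz] at hw
    have hsum0 : ∑ m : Fin (r - 1),
        (Finsupp.single (PSQuad.jdx hr) 1) (PSQuad.emb hr m)
          * PSQuad.wf r (PSQuad.emb hr m) = 0 := by
      apply Finset.sum_eq_zero
      intro m _
      rw [Finsupp.single_eq_of_ne' (fun h => PSQuad.emb_ne hr m h.symm), zero_mul]
    rw [Finsupp.single_eq_same, hsum0, one_mul, add_zero] at hw
    omega
  obtain ⟨ζ, hζ⟩ : ∃ ζ : ℂ, IsPrimitiveRoot ζ (r - 1) :=
    ⟨_, Complex.isPrimitiveRoot_exp (r - 1) (by omega)⟩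
  have hzr1 : eval (PSQuad.vpt r ζ) (zPol r (r - 1)) = 1 := by
    rw [PSQuad.eval_vpt_zPol hr hζ (r - 1) (by omega), if_pos dvd_rfl, one_div,
      inv_mul_cancel₀ (Nat.cast_ne_zero.2 (by omega : ¬ (r - 1 = 0)))]
  have hevA := PSQuad.eval_vpt_aeval hr hζ A hA0
  have hevB := PSQuad.eval_vpt_aeval hr hζ B hB0
  have hevL : eval (PSQuad.vpt r ζ) (psum (Fin r) ℂ (2 * r - 2)) = ((r - 1 : ℕ) : ℂ) := by
    rw [show psum (Fin r) ℂ (2 * r - 2)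
        = ∑ k : Fin r, (X k : MvPolynomial (Fin r) ℂ) ^ (2 * r - 2) from rfl]
    rw [map_sum]
    simp only [eval_pow, eval_X]
    rw [PSQuad.sum_vpt_pow hr hζ (2 * r - 2) (by omega), if_pos ⟨2, by omega⟩]
  have hc : c0 = ((r - 1 : ℕ) : ℂ) := by
    have h := congrArg (eval (PSQuad.vpt r ζ)) hstar
    rw [hevL] at h
    rw [eval_add, eval_add, eval_mul, eval_mul, eval_pow, eval_C, hzr1, hevA, hevB] at h
    simpa using h.symm
  have hcast : ((r - 1 : ℕ) : ℂ) = (r : ℂ) - 1 := by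
    push_cast [Nat.cast_sub (by omega : 1 ≤ r)]
    ring
  refine ⟨A, B, ?_⟩
  show psum (Fin r) ℂ (2 * r - 2) = _
  rw [hstar, hc, hcast]
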